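/- Under the distribution of the trade-off theorem (Y uniform on {-1,1}; X_0|Y=y is y with probability p and -y with probability 1-p, 1/2 ≤ p; Gaussian block coordinates as specified; r the random pair-swap transformation; A the mean-flipping adversarial perturbation), every classifier f : ℝ^{2d+1} → {-1,1} satisfies: P(f(r(X)) = Y) + ((2p-1)/(2(1-p))) · P(f(X + A(X)) = Y) ≤ p/(2(1-p)). -/

import Mathlib

open MeasureTheory ProbabilityTheory ENNReal

/-- Law of X₀ given Y = y: equals y with probability p and -y with probability 1-p. -/
noncomputable def bern (p : ℝ) (y : ℝ) : MeasureTheory.Measure ℝ :=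
  ENNReal.ofReal p • MeasureTheory.Measure.dirac y +
    ENNReal.ofReal (1 - p) • MeasureTheory.Measure.dirac (-y)

/-- Conditional law of X = (X₀, X₁, …, X_{2d}) given Y = y. -/
noncomputable def condLaw (d : ℕ) (p : ℝ) (y : ℝ) :
    MeasureTheory.Measure (Fin (2 * d + 1) → ℝ) :=
  MeasureTheory.Measure.pi (fun i =>
    if i.val = 0 then bern p y
    else if i.val % 2 = 1 then ProbabilityTheory.gaussianReal (3 * y / Real.sqrt d) 1
    else ProbabilityTheory.gaussianReal (-3 * y / Real.sqrt d) 1)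

/-- Joint law of (X, Y), with Y uniform on {-1, 1}. -/
noncomputable def jointLaw (d : ℕ) (p : ℝ) :
    MeasureTheory.Measure ((Fin (2 * d + 1) → ℝ) × ℝ) :=
  (2⁻¹ : ℝ≥0∞) • (condLaw d p 1).map (fun x => (x, (1 : ℝ))) +
    (2⁻¹ : ℝ≥0∞) • (condLaw d p (-1)).map (fun x => (x, (-1 : ℝ)))

/-- The adversarial perturbation A(x) (depending only on the true label y). -/
noncomputable def pert (d : ℕ) (y : ℝ) : Fin (2 * d + 1) → ℝ := fun i =>
  if i.val = 0 then 0
  else if i.val % 2 = 1 then -6 * y / Real.sqrt d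
  else 6 * y / Real.sqrt d

/-- The index permutation fixing 0 and swapping each pair (2t-1, 2t). -/
def swapIdx (d : ℕ) (i : Fin (2 * d + 1)) : Fin (2 * d + 1) :=
  if h0 : i.val = 0 then i
  else if h1 : i.val % 2 = 1 then ⟨i.val + 1, by have := i.isLt; omega⟩
  else ⟨i.val - 1, by have := i.isLt; omega⟩

/-- The coordinate-pair swap on ℝ^{2d+1}. -/
def swapMap (d : ℕ) (x : Fin (2 * d + 1) → ℝ) : Fin (2 * d + 1) → ℝ :=
  fun i => x (swapIdx d i)

/-- Law of (X + A(X), Y). -/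
noncomputable def advLaw (d : ℕ) (p : ℝ) :
    MeasureTheory.Measure ((Fin (2 * d + 1) → ℝ) × ℝ) :=
  (jointLaw d p).map (fun q => (q.1 + pert d q.2, q.2))

/-- Law of (r(X), Y): with prob 1/2 identity, with prob 1/2 the pair swap. -/
noncomputable def rLaw (d : ℕ) (p : ℝ) :
    MeasureTheory.Measure ((Fin (2 * d + 1) → ℝ) × ℝ) :=
  (2⁻¹ : ℝ≥0∞) • jointLaw d p +
    (2⁻¹ : ℝ≥0∞) • (jointLaw d p).map (fun q => (swapMap d q.1, q.2))

lemma swapIdx_val (d : ℕ) (i : Fin (2 * d + 1)) :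
    (swapIdx d i).val = if i.val = 0 then i.val
      else if i.val % 2 = 1 then i.val + 1 else i.val - 1 := by
  unfold swapIdx; split_ifs <;> rfl

lemma swapIdx_invol (d : ℕ) (i : Fin (2 * d + 1)) : swapIdx d (swapIdx d i) = i := by
  have h := i.isLt
  apply Fin.val_injective
  rw [swapIdx_val, swapIdx_val]
  by_cases h0 : i.val = 0
  · simp [h0]
  by_cases h1 : i.val % 2 = 1
  · have e1 : ¬ ((i.val + 1) % 2 = 1) := by omega
    simp [h0, h1, e1]
  · have e0 : ¬ (i.val - 1 = 0) := by omega
    have e1 : (i.val - 1) % 2 = 1 := by omega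
    simp [h0, h1, e0, e1]
    omega

noncomputable def gpart (d : ℕ) (y : ℝ) (i : Fin (2 * d + 1)) : MeasureTheory.Measure ℝ :=
  if i.val % 2 = 1 then ProbabilityTheory.gaussianReal (3 * y / Real.sqrt d) 1
  else ProbabilityTheory.gaussianReal (-3 * y / Real.sqrt d) 1

instance (d : ℕ) (y : ℝ) (i : Fin (2 * d + 1)) : IsProbabilityMeasure (gpart d y i) := by
  unfold gpart; split_ifs <;> infer_instance

lemma bern_prob (p y : ℝ) (h0 : 0 ≤ p) (h1 : p ≤ 1) : IsProbabilityMeasure (bern p y) := by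
  constructor
  simp only [bern, Measure.add_apply, Measure.smul_apply, Measure.dirac_apply_of_mem
    (Set.mem_univ _), smul_eq_mul, mul_one]
  rw [← ENNReal.ofReal_add h0 (by linarith)]
  norm_num

noncomputable def Dm (d : ℕ) (y z : ℝ) : MeasureTheory.Measure (Fin (2 * d + 1) → ℝ) :=
  MeasureTheory.Measure.pi (fun i => if i.val = 0 then MeasureTheory.Measure.dirac z else gpart d y i)

lemma pi_mix (d : ℕ) (y : ℝ) (c₁ c₂ : ℝ≥0∞) (hc₁ : c₁ ≠ ⊤) (hc₂ : c₂ ≠ ⊤) (z₁ z₂ : ℝ) :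
    MeasureTheory.Measure.pi (fun i : Fin (2 * d + 1) =>
      if i.val = 0 then (c₁ • MeasureTheory.Measure.dirac z₁ +
        c₂ • MeasureTheory.Measure.dirac z₂ : MeasureTheory.Measure ℝ)
      else gpart d y i) = c₁ • Dm d y z₁ + c₂ • Dm d y z₂ := by
  haveI : ∀ i : Fin (2 * d + 1), SigmaFinite
      ((fun i : Fin (2 * d + 1) => if i.val = 0 then (c₁ • MeasureTheory.Measure.dirac z₁ +
        c₂ • MeasureTheory.Measure.dirac z₂ : MeasureTheory.Measure ℝ)
      else gpart d y i) i) := by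
    intro i
    dsimp only
    split_ifs
    · haveI : IsFiniteMeasure (c₁ • MeasureTheory.Measure.dirac z₁ +
        c₂ • MeasureTheory.Measure.dirac z₂ : MeasureTheory.Measure ℝ) := by
        constructor
        have huniv : (c₁ • MeasureTheory.Measure.dirac z₁ +
            c₂ • MeasureTheory.Measure.dirac z₂ : MeasureTheory.Measure ℝ) Set.univ = c₁ + c₂ := by
          simp [Measure.add_apply]
        rw [huniv]
        exact ENNReal.add_lt_top.2 ⟨hc₁.lt_top, hc₂.lt_top⟩
      infer_instance
    · infer_instance
  haveI : ∀ i : Fin (2 * d + 1), SigmaFinite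
      ((fun i : Fin (2 * d + 1) => if i.val = 0 then MeasureTheory.Measure.dirac z₁ else gpart d y i) i) := by
    intro i; dsimp only; split_ifs <;> infer_instance
  haveI : ∀ i : Fin (2 * d + 1), SigmaFinite
      ((fun i : Fin (2 * d + 1) => if i.val = 0 then MeasureTheory.Measure.dirac z₂ else gpart d y i) i) := by
    intro i; dsimp only; split_ifs <;> infer_instance
  refine Measure.pi_eq (fun s hs => ?_)
  simp only [Dm, Measure.add_apply, Measure.smul_apply, smul_eq_mul,
    Measure.pi_pi]
  rw [Fin.prod_univ_succ, Fin.prod_univ_succ, Fin.prod_univ_succ]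
  simp only [Fin.val_zero, Fin.val_succ, if_pos rfl]
  have hne : ∀ i : Fin (2 * d), ¬ ((i.val + 1) = 0) := fun i => Nat.succ_ne_zero _
  simp only [hne, if_false]
  simp only [if_true, Measure.add_apply, Measure.smul_apply, smul_eq_mul]
  ring

noncomputable def flipLaw (d : ℕ) (p y : ℝ) : MeasureTheory.Measure (Fin (2 * d + 1) → ℝ) :=
  MeasureTheory.Measure.pi (fun i => if i.val = 0 then bern p y else gpart d (-y) i)

instance bern_fin (p y : ℝ) : IsFiniteMeasure (bern p y) := by
  constructor
  simp only [bern, Measure.add_apply, Measure.smul_apply, Measure.dirac_apply_of_mem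
    (Set.mem_univ _), smul_eq_mul, mul_one]
  exact ENNReal.add_lt_top.2 ⟨ENNReal.ofReal_lt_top, ENNReal.ofReal_lt_top⟩

lemma condLaw_eq_pi (d : ℕ) (p y : ℝ) :
    condLaw d p y = MeasureTheory.Measure.pi
      (fun i => if i.val = 0 then bern p y else gpart d y i) := by
  unfold condLaw gpart
  rfl

instance condLaw_comp_sf (d : ℕ) (p y : ℝ) :
    ∀ i : Fin (2 * d + 1), SigmaFinite ((fun i => if i.val = 0 then bern p y else gpart d y i) i) := by
  intro i; dsimp only; split_ifs <;> infer_instance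

instance flip_comp_sf (d : ℕ) (p y : ℝ) :
    ∀ i : Fin (2 * d + 1), SigmaFinite ((fun i => if i.val = 0 then bern p y else gpart d (-y) i) i) := by
  intro i; dsimp only; split_ifs <;> infer_instance

lemma condLaw_decomp (d : ℕ) (p y : ℝ) :
    condLaw d p y = ENNReal.ofReal p • Dm d y y + ENNReal.ofReal (1 - p) • Dm d y (-y) := by
  rw [condLaw_eq_pi, ← pi_mix d y _ _ ENNReal.ofReal_ne_top ENNReal.ofReal_ne_top y (-y)]
  congr 1

lemma flipLaw_decomp (d : ℕ) (p y : ℝ) :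
    flipLaw d p y = ENNReal.ofReal p • Dm d (-y) y + ENNReal.ofReal (1 - p) • Dm d (-y) (-y) := by
  rw [flipLaw, ← pi_mix d (-y) _ _ ENNReal.ofReal_ne_top ENNReal.ofReal_ne_top y (-y)]
  congr 1

lemma condLaw_prob (d : ℕ) (p y : ℝ) (h0 : 0 ≤ p) (h1 : p ≤ 1) :
    IsProbabilityMeasure (condLaw d p y) := by
  rw [condLaw_eq_pi]
  haveI : ∀ i : Fin (2 * d + 1), IsProbabilityMeasure
      ((fun i => if i.val = 0 then bern p y else gpart d y i) i) := by
    intro i; dsimp only; split_ifs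
    · exact bern_prob p y h0 h1
    · infer_instance
  infer_instance

lemma flipLaw_prob (d : ℕ) (p y : ℝ) (h0 : 0 ≤ p) (h1 : p ≤ 1) :
    IsProbabilityMeasure (flipLaw d p y) := by
  rw [flipLaw]
  haveI : ∀ i : Fin (2 * d + 1), IsProbabilityMeasure
      ((fun i => if i.val = 0 then bern p y else gpart d (-y) i) i) := by
    intro i; dsimp only; split_ifs
    · exact bern_prob p y h0 h1
    · infer_instance
  infer_instance

lemma measurable_swapMap (d : ℕ) : Measurable (swapMap d) :=
  measurable_pi_lambda _ fun i => measurable_pi_apply _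

lemma flipLaw_eq_map_pert (d : ℕ) (p y : ℝ) :
    flipLaw d p y = (condLaw d p y).map (fun x => x + pert d y) := by
  have hm : Measurable (fun x : Fin (2 * d + 1) → ℝ => x + pert d y) :=
    measurable_pi_lambda _ fun i => (measurable_pi_apply i).add_const _
  refine Measure.pi_eq fun s hs => ?_
  rw [Measure.map_apply hm (MeasurableSet.univ_pi hs)]
  have hpre : (fun x : Fin (2 * d + 1) → ℝ => x + pert d y) ⁻¹' Set.pi Set.univ s =
      Set.pi Set.univ (fun i => (fun t => t + pert d y i) ⁻¹' s i) := by
    ext x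
    simp [Set.mem_pi, Pi.add_apply]
  rw [hpre, condLaw_eq_pi, Measure.pi_pi]
  refine Finset.prod_congr rfl fun i _ => ?_
  by_cases h0 : i.val = 0
  · have hz : pert d y i = 0 := by unfold pert; rw [if_pos h0]
    simp only [if_pos h0, hz]
    congr 1
    ext t; simp
  · by_cases h1 : i.val % 2 = 1
    · have hpe : pert d y i = -6 * y / Real.sqrt d := by unfold pert; rw [if_neg h0, if_pos h1]
      simp only [if_neg h0, gpart, if_pos h1, hpe]
      rw [← Measure.map_apply (measurable_add_const _) (hs i), gaussianReal_map_add_const]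
      have : 3 * y / Real.sqrt d + -6 * y / Real.sqrt d = 3 * -y / Real.sqrt d := by ring
      rw [this]
    · have hpe : pert d y i = 6 * y / Real.sqrt d := by unfold pert; rw [if_neg h0, if_neg h1]
      simp only [if_neg h0, gpart, if_neg h1, hpe]
      rw [← Measure.map_apply (measurable_add_const _) (hs i), gaussianReal_map_add_const]
      have : -3 * y / Real.sqrt d + 6 * y / Real.sqrt d = -3 * -y / Real.sqrt d := by ring
      rw [this]

lemma swap_comp_eq (d : ℕ) (p y : ℝ) (i : Fin (2 * d + 1)) :
    (if (swapIdx d i).val = 0 then bern p y else gpart d y (swapIdx d i)) =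
      (if i.val = 0 then bern p y else gpart d (-y) i) := by
  have h := i.isLt
  have hv := swapIdx_val d i
  by_cases h0 : i.val = 0
  · have : (swapIdx d i).val = 0 := by rw [hv, if_pos h0]; exact h0
    rw [if_pos this, if_pos h0]
  · by_cases h1 : i.val % 2 = 1
    · have hv' : (swapIdx d i).val = i.val + 1 := by rw [hv, if_neg h0, if_pos h1]
      have h0' : ¬ (swapIdx d i).val = 0 := by omega
      have h1' : ¬ ((swapIdx d i).val % 2 = 1) := by omega
      rw [if_neg h0', if_neg h0]
      unfold gpart
      rw [if_neg h1', if_pos h1]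
      congr 1
      ring
    · have hv' : (swapIdx d i).val = i.val - 1 := by rw [hv, if_neg h0, if_neg h1]
      have h0' : ¬ (swapIdx d i).val = 0 := by omega
      have h1' : (swapIdx d i).val % 2 = 1 := by omega
      rw [if_neg h0', if_neg h0]
      unfold gpart
      rw [if_pos h1', if_neg h1]
      congr 1
      ring

lemma flipLaw_eq_map_swap (d : ℕ) (p y : ℝ) :
    flipLaw d p y = (condLaw d p y).map (swapMap d) := by
  refine Measure.pi_eq fun s hs => ?_
  rw [Measure.map_apply (measurable_swapMap d) (MeasurableSet.univ_pi hs)]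
  have hpre : swapMap d ⁻¹' Set.pi Set.univ s =
      Set.pi Set.univ (fun j => s (swapIdx d j)) := by
    ext x
    simp only [Set.mem_preimage, Set.mem_pi, Set.mem_univ, forall_true_left, swapMap,
      true_implies]
    constructor
    · intro hx j
      have := hx (swapIdx d j)
      rwa [swapIdx_invol] at this
    · intro hx i
      have := hx (swapIdx d i)
      rwa [swapIdx_invol] at this
  rw [hpre, condLaw_eq_pi, Measure.pi_pi]
  rw [← Equiv.prod_comp (Function.Involutive.toPerm _ (swapIdx_invol d))
    (fun j => (if j.val = 0 then bern p y else gpart d y j) (s (swapIdx d j)))]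
  refine Finset.prod_congr rfl fun i _ => ?_
  change (if (swapIdx d i).val = 0 then bern p y else gpart d y (swapIdx d i))
    (s (swapIdx d (swapIdx d i))) = _
  rw [swapIdx_invol, swap_comp_eq]

lemma measurable_pertFun (d : ℕ) : Measurable (pert d) := by
  refine measurable_pi_lambda _ fun i => ?_
  unfold pert
  split_ifs
  · exact measurable_const
  · exact (measurable_id.const_mul (-6)).div_const _
  · exact (measurable_id.const_mul (6)).div_const _

lemma measurable_advFun (d : ℕ) :
    Measurable (fun q : (Fin (2 * d + 1) → ℝ) × ℝ => (q.1 + pert d q.2, q.2)) :=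
  (measurable_fst.add ((measurable_pertFun d).comp measurable_snd)).prodMk measurable_snd

lemma measurable_swapFun (d : ℕ) :
    Measurable (fun q : (Fin (2 * d + 1) → ℝ) × ℝ => (swapMap d q.1, q.2)) :=
  ((measurable_swapMap d).comp measurable_fst).prodMk measurable_snd

lemma advLaw_repr (d : ℕ) (p : ℝ) :
    advLaw d p = (2⁻¹ : ℝ≥0∞) • (flipLaw d p 1).map (fun x => (x, (1 : ℝ))) +
      (2⁻¹ : ℝ≥0∞) • (flipLaw d p (-1)).map (fun x => (x, (-1 : ℝ))) := by
  have hmk1 : Measurable (fun x : Fin (2 * d + 1) → ℝ => (x, (1 : ℝ))) :=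
    measurable_id.prodMk measurable_const
  have hmk2 : Measurable (fun x : Fin (2 * d + 1) → ℝ => (x, (-1 : ℝ))) :=
    measurable_id.prodMk measurable_const
  have hadd1 : Measurable (fun x : Fin (2 * d + 1) → ℝ => x + pert d 1) :=
    measurable_pi_lambda _ fun i => (measurable_pi_apply i).add_const _
  have hadd2 : Measurable (fun x : Fin (2 * d + 1) → ℝ => x + pert d (-1)) :=
    measurable_pi_lambda _ fun i => (measurable_pi_apply i).add_const _
  unfold advLaw jointLaw
  rw [Measure.map_add _ _ (measurable_advFun d), Measure.map_smul, Measure.map_smul,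
    Measure.map_map (measurable_advFun d) hmk1, Measure.map_map (measurable_advFun d) hmk2]
  have hc1 : ((fun q : (Fin (2 * d + 1) → ℝ) × ℝ => (q.1 + pert d q.2, q.2)) ∘
      (fun x : Fin (2 * d + 1) → ℝ => (x, (1 : ℝ)))) =
      (fun x : Fin (2 * d + 1) → ℝ => (x, (1 : ℝ))) ∘ (fun x => x + pert d 1) := rfl
  have hc2 : ((fun q : (Fin (2 * d + 1) → ℝ) × ℝ => (q.1 + pert d q.2, q.2)) ∘
      (fun x : Fin (2 * d + 1) → ℝ => (x, (-1 : ℝ)))) =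
      (fun x : Fin (2 * d + 1) → ℝ => (x, (-1 : ℝ))) ∘ (fun x => x + pert d (-1)) := rfl
  rw [hc1, hc2, ← Measure.map_map hmk1 hadd1, ← Measure.map_map hmk2 hadd2,
    ← flipLaw_eq_map_pert, ← flipLaw_eq_map_pert]

lemma swapJoint_eq_advLaw (d : ℕ) (p : ℝ) :
    (jointLaw d p).map (fun q => (swapMap d q.1, q.2)) = advLaw d p := by
  have hmk1 : Measurable (fun x : Fin (2 * d + 1) → ℝ => (x, (1 : ℝ))) :=
    measurable_id.prodMk measurable_const
  have hmk2 : Measurable (fun x : Fin (2 * d + 1) → ℝ => (x, (-1 : ℝ))) :=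
    measurable_id.prodMk measurable_const
  rw [advLaw_repr]
  unfold jointLaw
  rw [Measure.map_add _ _ (measurable_swapFun d), Measure.map_smul, Measure.map_smul,
    Measure.map_map (measurable_swapFun d) hmk1, Measure.map_map (measurable_swapFun d) hmk2]
  have hc1 : ((fun q : (Fin (2 * d + 1) → ℝ) × ℝ => (swapMap d q.1, q.2)) ∘
      (fun x : Fin (2 * d + 1) → ℝ => (x, (1 : ℝ)))) =
      (fun x : Fin (2 * d + 1) → ℝ => (x, (1 : ℝ))) ∘ swapMap d := rfl
  have hc2 : ((fun q : (Fin (2 * d + 1) → ℝ) × ℝ => (swapMap d q.1, q.2)) ∘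
      (fun x : Fin (2 * d + 1) → ℝ => (x, (-1 : ℝ)))) =
      (fun x : Fin (2 * d + 1) → ℝ => (x, (-1 : ℝ))) ∘ swapMap d := rfl
  rw [hc1, hc2, ← Measure.map_map hmk1 (measurable_swapMap d),
    ← Measure.map_map hmk2 (measurable_swapMap d), ← flipLaw_eq_map_swap, ← flipLaw_eq_map_swap]

lemma core_ineq (d : ℕ) (p y : ℝ) (hp0 : 1/2 ≤ p) (hp1 : p < 1)
    (T : Set (Fin (2 * d + 1) → ℝ)) :
    ENNReal.ofReal ((1 - p) / p) * condLaw d p (-y) T ≤ flipLaw d p y T := by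
  have hp : (0 : ℝ) < p := by linarith
  have h1p : (0 : ℝ) ≤ 1 - p := by linarith
  have hcond : condLaw d p (-y) =
      ENNReal.ofReal p • Dm d (-y) (-y) + ENNReal.ofReal (1 - p) • Dm d (-y) y := by
    rw [condLaw_decomp d p (-y), neg_neg]
  rw [hcond, flipLaw_decomp]
  simp only [Measure.add_apply, Measure.smul_apply, smul_eq_mul]
  rw [mul_add, ← mul_assoc, ← mul_assoc, ← ENNReal.ofReal_mul (div_nonneg h1p hp.le),
    ← ENNReal.ofReal_mul (div_nonneg h1p hp.le)]
  have e1 : (1 - p) / p * p = 1 - p := div_mul_cancel₀ _ (ne_of_gt hp)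
  have e2 : (1 - p) / p * (1 - p) ≤ p := by
    rw [div_mul_eq_mul_div, div_le_iff₀ hp]
    nlinarith
  rw [e1]
  calc ENNReal.ofReal (1 - p) * Dm d (-y) (-y) T +
        ENNReal.ofReal ((1 - p) / p * (1 - p)) * Dm d (-y) y T
      ≤ ENNReal.ofReal (1 - p) * Dm d (-y) (-y) T + ENNReal.ofReal p * Dm d (-y) y T := by
        exact add_le_add_right (mul_le_mul_left (ENNReal.ofReal_le_ofReal e2) _) _
    _ = ENNReal.ofReal p * Dm d (-y) y T + ENNReal.ofReal (1 - p) * Dm d (-y) (-y) T :=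
        add_comm _ _

/-- The trade-off inequality:
P(f(r(X)) = Y) + ((2p-1)/(2(1-p))) · P(f(X + A(X)) = Y) ≤ p/(2(1-p)). -/
theorem invariance_robustness_inequality (d : ℕ) (hd : 1 ≤ d) (p : ℝ)
    (hp0 : 1/2 ≤ p) (hp1 : p < 1)
    (f : (Fin (2 * d + 1) → ℝ) → ℝ) (hf : Measurable f)
    (hfval : ∀ x, f x = 1 ∨ f x = -1) :
    (rLaw d p {q | f q.1 = q.2}).toReal +
        ((2 * p - 1) / (2 * (1 - p))) * (advLaw d p {q | f q.1 = q.2}).toReal ≤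
      p / (2 * (1 - p)) := by
  have hp : (0 : ℝ) < p := by linarith
  have h1p : (0 : ℝ) < 1 - p := by linarith
  haveI hc1 : IsProbabilityMeasure (condLaw d p 1) := condLaw_prob _ _ _ hp.le hp1.le
  haveI hc2 : IsProbabilityMeasure (condLaw d p (-1)) := condLaw_prob _ _ _ hp.le hp1.le
  haveI hfl1 : IsProbabilityMeasure (flipLaw d p 1) := flipLaw_prob _ _ _ hp.le hp1.le
  haveI hfl2 : IsProbabilityMeasure (flipLaw d p (-1)) := flipLaw_prob _ _ _ hp.le hp1.le
  have hmk1 : Measurable (fun x : Fin (2 * d + 1) → ℝ => (x, (1 : ℝ))) :=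
    measurable_id.prodMk measurable_const
  have hmk2 : Measurable (fun x : Fin (2 * d + 1) → ℝ => (x, (-1 : ℝ))) :=
    measurable_id.prodMk measurable_const
  set S : Set ((Fin (2 * d + 1) → ℝ) × ℝ) := {q | f q.1 = q.2} with hSdef
  have hS : MeasurableSet S := measurableSet_eq_fun (hf.comp measurable_fst) measurable_snd
  haveI hJP : IsProbabilityMeasure (jointLaw d p) := by
    constructor
    simp only [jointLaw, Measure.add_apply, Measure.smul_apply, smul_eq_mul,
      Measure.map_apply hmk1 MeasurableSet.univ, Measure.map_apply hmk2 MeasurableSet.univ,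
      Set.preimage_univ, measure_univ, mul_one]
    exact ENNReal.inv_two_add_inv_two
  haveI hAP : IsProbabilityMeasure (advLaw d p) := by
    constructor
    rw [advLaw_repr]
    simp only [Measure.add_apply, Measure.smul_apply, smul_eq_mul,
      Measure.map_apply hmk1 MeasurableSet.univ, Measure.map_apply hmk2 MeasurableSet.univ,
      Set.preimage_univ, measure_univ, mul_one]
    exact ENNReal.inv_two_add_inv_two
  have hjS : jointLaw d p S =
      2⁻¹ * condLaw d p 1 {x | f x = 1} + 2⁻¹ * condLaw d p (-1) {x | f x = -1} := by
    simp only [jointLaw, Measure.add_apply, Measure.smul_apply, smul_eq_mul,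
      Measure.map_apply hmk1 hS, Measure.map_apply hmk2 hS]
    rfl
  have hset1 : (fun x : Fin (2 * d + 1) → ℝ => (x, (1 : ℝ))) ⁻¹' Sᶜ = {x | f x = -1} := by
    ext x
    simp only [Set.mem_preimage, Set.mem_compl_iff, hSdef, Set.mem_setOf_eq]
    constructor
    · intro hx
      rcases hfval x with h | h
      · exact absurd h hx
      · exact h
    · intro hx h1
      rw [hx] at h1; norm_num at h1
  have hset2 : (fun x : Fin (2 * d + 1) → ℝ => (x, (-1 : ℝ))) ⁻¹' Sᶜ = {x | f x = 1} := by
    ext x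
    simp only [Set.mem_preimage, Set.mem_compl_iff, hSdef, Set.mem_setOf_eq]
    constructor
    · intro hx
      rcases hfval x with h | h
      · exact h
      · exact absurd h hx
    · intro hx h1
      rw [hx] at h1; norm_num at h1
  have haC : advLaw d p Sᶜ =
      2⁻¹ * flipLaw d p 1 {x | f x = -1} + 2⁻¹ * flipLaw d p (-1) {x | f x = 1} := by
    rw [advLaw_repr]
    simp only [Measure.add_apply, Measure.smul_apply, smul_eq_mul,
      Measure.map_apply hmk1 hS.compl, Measure.map_apply hmk2 hS.compl, hset1, hset2]
  have key : ENNReal.ofReal ((1 - p) / p) * jointLaw d p S ≤ advLaw d p Sᶜ := by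
    rw [hjS, haC]
    have k1 : ENNReal.ofReal ((1 - p) / p) * condLaw d p (-1) {x | f x = -1} ≤
        flipLaw d p 1 {x | f x = -1} := core_ineq d p 1 hp0 hp1 _
    have k2 : ENNReal.ofReal ((1 - p) / p) * condLaw d p 1 {x | f x = 1} ≤
        flipLaw d p (-1) {x | f x = 1} := by
      have h := core_ineq d p (-1) hp0 hp1 {x | f x = 1}
      rwa [neg_neg] at h
    calc ENNReal.ofReal ((1 - p) / p) *
          (2⁻¹ * condLaw d p 1 {x | f x = 1} + 2⁻¹ * condLaw d p (-1) {x | f x = -1})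
        = 2⁻¹ * (ENNReal.ofReal ((1 - p) / p) * condLaw d p 1 {x | f x = 1}) +
          2⁻¹ * (ENNReal.ofReal ((1 - p) / p) * condLaw d p (-1) {x | f x = -1}) := by ring
      _ ≤ 2⁻¹ * flipLaw d p (-1) {x | f x = 1} + 2⁻¹ * flipLaw d p 1 {x | f x = -1} := by
          gcongr
      _ = 2⁻¹ * flipLaw d p 1 {x | f x = -1} + 2⁻¹ * flipLaw d p (-1) {x | f x = 1} :=
          add_comm _ _
  set A := (jointLaw d p S).toReal with hA
  set B := (advLaw d p S).toReal with hB
  set C := (advLaw d p Sᶜ).toReal with hC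
  have hBC : B + C = 1 := by
    rw [hB, hC, ← ENNReal.toReal_add (measure_ne_top _ _) (measure_ne_top _ _),
      measure_add_measure_compl hS, measure_univ, ENNReal.toReal_one]
  have hkey : (1 - p) / p * A ≤ C := by
    have h := ENNReal.toReal_mono (measure_ne_top _ _) key
    rwa [ENNReal.toReal_mul, ENNReal.toReal_ofReal (div_nonneg (by linarith) hp.le)] at h
  have hrS : rLaw d p S = 2⁻¹ * jointLaw d p S + 2⁻¹ * advLaw d p S := by
    unfold rLaw
    rw [swapJoint_eq_advLaw]
    simp [Measure.add_apply, Measure.smul_apply, smul_eq_mul]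
  have hr : (rLaw d p S).toReal = 2⁻¹ * A + 2⁻¹ * B := by
    rw [hrS, ENNReal.toReal_add (ENNReal.mul_ne_top (by norm_num) (measure_ne_top _ _))
      (ENNReal.mul_ne_top (by norm_num) (measure_ne_top _ _)),
      ENNReal.toReal_mul, ENNReal.toReal_mul]
    norm_num
    rfl
  have hA0 : 0 ≤ A := ENNReal.toReal_nonneg
  have hB0 : 0 ≤ B := ENNReal.toReal_nonneg
  have hC0 : 0 ≤ C := ENNReal.toReal_nonneg
  have key2 : (1 - p) * A ≤ C * p := by
    rw [div_mul_eq_mul_div, div_le_iff₀ hp] at hkey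
    exact hkey
  rw [hr]
  have hne : (1 : ℝ) - p ≠ 0 := ne_of_gt h1p
  have h2 : (0 : ℝ) < 2 * (1 - p) := by linarith
  have expand : p / (2 * (1 - p)) -
      (2⁻¹ * A + 2⁻¹ * B + (2 * p - 1) / (2 * (1 - p)) * B) =
      (C * p - (1 - p) * A) / (2 * (1 - p)) := by
    have hB1 : B = 1 - C := by linarith
    rw [hB1]
    field_simp
    ring
  have hnum : 0 ≤ (C * p - (1 - p) * A) / (2 * (1 - p)) :=
    div_nonneg (by linarith) h2.le
  linarith [expand, hnum]
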